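/- With the Buchdahl I parameters B = κ^{1/2}(3κ - 4)/((2 + 3κ)(2κ - 2)^{1/2}) and K = 1/(2κ²m²(3κ - 2)), for κ > 4/3 and m > 0, the pressure p(r) = -(9K/(16π)) · [B(Kr² + 1)^{1/2}(2 - Kr²)^{1/2}(2Kr² + 1) + K²r⁴ - 1] / ((Kr² + 1)^{3/2}[B(2Kr² + 5)(2 - Kr²)^{1/2} + (Kr² + 1)^{3/2}]) vanishes at r = 2κm. -/

import Mathlib

/-- The Buchdahl I pressure vanishes at r = 2κm for the matched parameters
B = √κ (3κ - 4)/((2 + 3κ)√(2κ - 2)) and K = 1/(2κ²m²(3κ - 2)), with κ > 4/3 and m > 0. -/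
theorem buchdahlI_pressure_vanishes (κ m B K : ℝ) (hκ : 4 / 3 < κ) (hm : 0 < m)
    (hB : B = Real.sqrt κ * (3 * κ - 4) / ((2 + 3 * κ) * Real.sqrt (2 * κ - 2)))
    (hK : K = 1 / (2 * κ ^ 2 * m ^ 2 * (3 * κ - 2))) :
    -(9 * K / (16 * Real.pi)) *
      ((B * Real.sqrt (K * (2 * κ * m) ^ 2 + 1) * Real.sqrt (2 - K * (2 * κ * m) ^ 2) *
            (2 * K * (2 * κ * m) ^ 2 + 1) + K ^ 2 * (2 * κ * m) ^ 4 - 1) /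
        ((Real.sqrt (K * (2 * κ * m) ^ 2 + 1)) ^ 3 *
          (B * (2 * K * (2 * κ * m) ^ 2 + 5) * Real.sqrt (2 - K * (2 * κ * m) ^ 2)
            + (Real.sqrt (K * (2 * κ * m) ^ 2 + 1)) ^ 3))) = 0 := by
  have hκ0 : (0:ℝ) < κ := by linarith
  have ha : (0:ℝ) < 3 * κ - 2 := by linarith
  have hb : (0:ℝ) < 2 * κ - 2 := by linarith
  have ht : K * (2 * κ * m) ^ 2 = 2 / (3 * κ - 2) := by
    rw [hK]; field_simp
  have h1 : Real.sqrt (K * (2 * κ * m) ^ 2 + 1) * Real.sqrt (2 - K * (2 * κ * m) ^ 2)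
      = 3 * Real.sqrt κ * Real.sqrt (2 * κ - 2) / (3 * κ - 2) := by
    rw [← Real.sqrt_mul (by rw [ht]; positivity)]
    rw [show (K * (2 * κ * m) ^ 2 + 1) * (2 - K * (2 * κ * m) ^ 2)
        = (3 * Real.sqrt κ * Real.sqrt (2 * κ - 2) / (3 * κ - 2)) ^ 2 by
      have e1 : Real.sqrt κ ^ 2 = κ := Real.sq_sqrt hκ0.le
      have e2 : Real.sqrt (2 * κ - 2) ^ 2 = 2 * κ - 2 := Real.sq_sqrt hb.le
      rw [ht, div_pow, mul_pow, mul_pow, e1, e2]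
      field_simp
      ring]
    exact Real.sqrt_sq (by positivity)
  rw [mul_eq_zero]; right
  rw [div_eq_zero_iff]; left
  rw [show B * Real.sqrt (K * (2 * κ * m) ^ 2 + 1) * Real.sqrt (2 - K * (2 * κ * m) ^ 2)
        * (2 * K * (2 * κ * m) ^ 2 + 1)
      = B * (Real.sqrt (K * (2 * κ * m) ^ 2 + 1) * Real.sqrt (2 - K * (2 * κ * m) ^ 2))
        * (2 * (K * (2 * κ * m) ^ 2) + 1) by ring,
      show K ^ 2 * (2 * κ * m) ^ 4 = (K * (2 * κ * m) ^ 2) ^ 2 by ring, h1, hB, ht]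
  have e1 : Real.sqrt κ * Real.sqrt κ = κ := Real.mul_self_sqrt hκ0.le
  have hsb : Real.sqrt (2 * κ - 2) ≠ 0 := by positivity
  generalize Real.sqrt (2 * κ - 2) = s at hsb ⊢
  field_simp
  linear_combination (3 * (3 * κ - 4) * (3 * κ + 2)) * e1
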